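/- Let 0 < q ≤ 2, let A be an m × n real matrix, let y ∈ ℝ^m, let x_k ∈ ℝ^n, and let ε > 0. Define, for each index i, the weight w_i = ((A x_k − y)_i² + ε)^((q−2)/4) and the residual r(x)_i = (A x − y)_i. Then for every x ∈ ℝ^n, ∑_i |r(x)_i|^q ≤ (q/2)·∑_i (w_i · r(x)_i)² + ((2−q)/2)·∑_i ((A x_k − y)_i² + ε)^(q/2). -/
import Mathlib

lemma concave_rpow_tangent {p s u : ℝ} (hp0 : 0 ≤ p) (hp1 : p ≤ 1) (hs : 0 < s)
    (hu : 0 ≤ u) : u ^ p ≤ p * s ^ (p - 1) * u + (1 - p) * s ^ p := by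
  have h := rpow_one_add_le_one_add_mul_self (s := u / s - 1) (by
    have : 0 ≤ u / s := div_nonneg hu hs.le; linarith) hp0 hp1
  have h1 : (1 + (u / s - 1)) = u / s := by ring
  rw [h1] at h
  have h2 : (u / s) ^ p = u ^ p / s ^ p := Real.div_rpow hu hs.le p
  rw [h2] at h
  have hsp : 0 < s ^ p := Real.rpow_pos_of_pos hs p
  have := (div_le_iff₀ hsp).mp h
  calc u ^ p ≤ (1 + p * (u / s - 1)) * s ^ p := this
    _ = p * (s ^ p / s) * u + (1 - p) * s ^ p := by field_simp; ring
    _ = p * s ^ (p - 1) * u + (1 - p) * s ^ p := by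
        rw [Real.rpow_sub hs, Real.rpow_one]

/-- Lemma 2: the ε-perturbed reweighted least-squares surrogate majorizes the
ℓq data-fidelity term. -/
theorem irls_surrogate_majorizes {m n : ℕ} (q ε : ℝ) (hq0 : 0 < q) (hq2 : q ≤ 2)
    (hε : 0 < ε) (A : Matrix (Fin m) (Fin n) ℝ) (y : Fin m → ℝ) (xk : Fin n → ℝ)
    (w : Fin m → ℝ) (hw : ∀ i, w i = ((A.mulVec xk - y) i ^ 2 + ε) ^ ((q - 2) / 4))
    (r : (Fin n → ℝ) → Fin m → ℝ) (hr : ∀ x i, r x i = (A.mulVec x - y) i) :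
    ∀ x : Fin n → ℝ,
      ∑ i, |r x i| ^ q ≤
        q / 2 * ∑ i, (w i * r x i) ^ 2
          + (2 - q) / 2 * ∑ i, ((A.mulVec xk - y) i ^ 2 + ε) ^ (q / 2) := by
  intro x
  have key : ∀ i, |r x i| ^ q ≤
      q / 2 * (w i * r x i) ^ 2
        + (2 - q) / 2 * ((A.mulVec xk - y) i ^ 2 + ε) ^ (q / 2) := by
    intro i
    set s : ℝ := (A.mulVec xk - y) i ^ 2 + ε with hsdef
    have hs : 0 < s := by positivity
    set t : ℝ := r x i
    have h1 : |t| ^ q = (t ^ 2) ^ (q / 2) := by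
      rw [← sq_abs, ← Real.rpow_natCast |t| 2, ← Real.rpow_mul (abs_nonneg t)]
      push_cast
      congr 1
      ring
    have h2 : (w i * t) ^ 2 = s ^ (q / 2 - 1) * t ^ 2 := by
      rw [mul_pow, hw i, ← hsdef, ← Real.rpow_natCast (s ^ ((q - 2) / 4)) 2,
        ← Real.rpow_mul hs.le]
      push_cast
      congr 1
      ring
    have h3 := concave_rpow_tangent (p := q / 2) (s := s) (u := t ^ 2)
      (by linarith) (by linarith) hs (sq_nonneg t)
    rw [h1, h2]
    calc (t ^ 2) ^ (q / 2) ≤ q / 2 * s ^ (q / 2 - 1) * t ^ 2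
          + (1 - q / 2) * s ^ (q / 2) := h3
      _ = q / 2 * (s ^ (q / 2 - 1) * t ^ 2) + (2 - q) / 2 * s ^ (q / 2) := by ring
  calc ∑ i, |r x i| ^ q
      ≤ ∑ i, (q / 2 * (w i * r x i) ^ 2
          + (2 - q) / 2 * ((A.mulVec xk - y) i ^ 2 + ε) ^ (q / 2)) :=
        Finset.sum_le_sum fun i _ => key i
    _ = q / 2 * ∑ i, (w i * r x i) ^ 2
          + (2 - q) / 2 * ∑ i, ((A.mulVec xk - y) i ^ 2 + ε) ^ (q / 2) := by
        rw [Finset.sum_add_distrib, Finset.mul_sum, Finset.mul_sum]
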